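/- In a shelling of a (not necessarily pure) finite simplicial complex, the first facet always has maximal dimension, i.e., dim F_1 = dim X. -/

import Mathlib

variable {V : Type*} [DecidableEq V]

/-- A finite (abstract) simplicial complex: a finite family of nonempty finite sets,
closed under nonempty subsets. -/
def IsComplex (X : Finset (Finset V)) : Prop :=
  (∀ s ∈ X, s.Nonempty) ∧ ∀ s ∈ X, ∀ t : Finset V, t.Nonempty → t ⊆ s → t ∈ X

/-- A facet is a maximal face. -/
def IsFacet (X : Finset (Finset V)) (s : Finset V) : Prop :=
  s ∈ X ∧ ∀ t ∈ X, s ⊆ t → s = t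

/-- A shelling of `X`. -/
def IsShelling (X : Finset (Finset V)) {t : ℕ} (F : Fin t → Finset V) : Prop :=
  Function.Injective F ∧ (∀ i, IsFacet X (F i)) ∧ (∀ s, IsFacet X s → ∃ i, F i = s) ∧
    ∀ k : Fin t, 0 < (k : ℕ) →
      ∃ S : Finset (Finset V), S.Nonempty ∧
        (∀ s ∈ S, s ⊆ F k ∧ s.card + 1 = (F k).card) ∧
        ∀ σ : Finset V, σ.Nonempty →
          ((σ ⊆ F k ∧ ∃ i, i < k ∧ σ ⊆ F i) ↔ ∃ s ∈ S, σ ⊆ s)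

/-- Every face is contained in a facet. -/
lemma exists_facet_superset (X : Finset (Finset V)) {s : Finset V} (hs : s ∈ X) :
    ∃ m, IsFacet X m ∧ s ⊆ m := by
  classical
  obtain ⟨m, hm, hmax⟩ := (X.filter (s ⊆ ·)).exists_maximal
    ⟨s, by simp [hs]⟩
  simp only [Finset.mem_filter] at hm
  refine ⟨m, ⟨hm.1, fun u hu hmu => ?_⟩, hm.2⟩
  by_contra hne
  exact hne (le_antisymm hmu (hmax (Finset.mem_filter.mpr ⟨hu, hm.2.trans hmu⟩) hmu))

/-- in any shelling of a (not necessarily pure) finite simplicial complex,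
the first facet has maximal dimension: `dim F_1 = dim X`, i.e.
`(F 0).card = X.sup card`. -/
theorem shelling_first_facet_max_dim (X : Finset (Finset V)) (hX : IsComplex X)
    {t : ℕ} (F : Fin t → Finset V) (hF : IsShelling X F) (ht : 0 < t) :
    (F ⟨0, ht⟩).card = X.sup Finset.card := by
  classical
  obtain ⟨hinj, hfac, hsurj, hshell⟩ := hF
  have h0ne : (F ⟨0, ht⟩).Nonempty := hX.1 _ (hfac _).1
  have h0pos : 0 < (F ⟨0, ht⟩).card := Finset.card_pos.mpr h0ne
  have key : ∀ n : ℕ, ∀ k : Fin t, (k : ℕ) ≤ n → (F k).card ≤ (F ⟨0, ht⟩).card := by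
    intro n
    induction n with
    | zero =>
      intro k hk
      have : k = ⟨0, ht⟩ := Fin.ext (Nat.le_zero.mp hk)
      rw [this]
    | succ n IH =>
      intro k hk
      rcases Nat.eq_zero_or_pos (k : ℕ) with hk0 | hkpos
      · have : k = ⟨0, ht⟩ := Fin.ext hk0
        rw [this]
      rcases Nat.lt_or_ge (F k).card 2 with hc | hc
      · omega
      · obtain ⟨S, hSne, hScard, hSiff⟩ := hshell k hkpos
        obtain ⟨s, hsS⟩ := hSne
        have hs := hScard s hsS
        have hsne : s.Nonempty := by
          rw [← Finset.card_pos]; omega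
        obtain ⟨_, i, hik, hsi⟩ := (hSiff s hsne).2 ⟨s, hsS, le_refl s⟩
        have hi : (F k).card ≤ (F i).card := by
          by_contra hgt
          push_neg at hgt
          have hcard : (F i).card ≤ s.card := by omega
          have heq : s = F i := Finset.eq_of_subset_of_card_le hsi hcard
          have hik' : F i = F k := (hfac i).2 (F k) (hfac k).1 (heq ▸ hs.1)
          exact absurd (hinj hik') (Fin.ne_of_lt hik)
        have hile : (i : ℕ) ≤ n := by
          have := Fin.lt_iff_val_lt_val.mp hik
          omega
        exact hi.trans (IH i hile)
  apply le_antisymm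
  · exact Finset.le_sup (hfac _).1
  · apply Finset.sup_le
    intro s hs
    obtain ⟨m, hm, hsm⟩ := exists_facet_superset X hs
    obtain ⟨i, rfl⟩ := hsurj m hm
    exact (Finset.card_le_card hsm).trans (key i i le_rfl)
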